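/- Let k be minimal with binomial(k, ⌊k/2⌋) ≥ ℓ. Then every good system of categories for the star with ℓ leaves and diameter 2 has membership dimension at least k, and there exists a good system with membership dimension exactly k. -/

import Mathlib

open Finset SimpleGraph

variable {V : Type*}

def catDist [DecidableEq V] (S : Finset (Finset V)) (s t : V) : ℕ :=
  (S.filter fun C => t ∈ C ∧ s ∉ C).card

def IsGoodSystem [DecidableEq V] (G : SimpleGraph V) (S : Finset (Finset V)) : Prop :=
  (∀ C ∈ S, (G.induce (C : Set V)).Connected) ∧
    ∀ s t : V, s ≠ t → ∃ u, G.Adj s u ∧ catDist S u t < catDist S s t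

def memdim [DecidableEq V] [Fintype V] (S : Finset (Finset V)) : ℕ :=
  univ.sup fun v : V => (S.filter fun C => v ∈ C).card

noncomputable def graphDiam [Fintype V] (G : SimpleGraph V) : ℕ :=
  univ.sup fun p : V × V => G.dist p.1 p.2

noncomputable def minMemdim (V : Type*) [DecidableEq V] [Fintype V] (G : SimpleGraph V) : ℕ :=
  sInf {m | ∃ S : Finset (Finset V), IsGoodSystem G S ∧ memdim S = m}

def starGraph (ℓ : ℕ) : SimpleGraph (Option (Fin ℓ)) where
  Adj a b := (a = none) ≠ (b = none)
  symm := ⟨fun _ _ h => h.symm⟩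
  loopless := ⟨fun _ h => h rfl⟩

lemma star_key {ℓ : ℕ} {S : Finset (Finset (Option (Fin ℓ)))}
    (hS : IsGoodSystem (_root_.starGraph ℓ) S) {i j : Fin ℓ} (hij : i ≠ j) :
    ∃ C ∈ S, none ∈ C ∧ some j ∈ C ∧ some i ∉ C := by
  obtain ⟨u, hadj, hlt⟩ := hS.2 (some i) (some j) (by simp [hij])
  have hu : u = none := by
    by_contra h
    exact hadj (by simp [h])
  subst hu
  by_contra hC
  push_neg at hC
  refine absurd hlt (not_lt.2 (Finset.card_le_card ?_))
  intro C hCmem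
  simp only [Finset.mem_filter] at hCmem ⊢
  obtain ⟨hCS, hj, hi⟩ := hCmem
  refine ⟨hCS, hj, fun hn => ?_⟩
  exact hi (hC C hCS hn hj)

lemma star_lower {ℓ k : ℕ} (hk : ∀ k' < k, k'.choose (k' / 2) < ℓ)
    (S : Finset (Finset (Option (Fin ℓ)))) (hS : IsGoodSystem (_root_.starGraph ℓ) S) :
    k ≤ memdim S := by
  classical
  set T := S.filter (fun C => none ∈ C) with hT
  have hTmem : T.card ≤ memdim S := by
    have := Finset.le_sup (f := fun v : Option (Fin ℓ) => (S.filter fun C => v ∈ C).card)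
      (Finset.mem_univ (none : Option (Fin ℓ)))
    exact this
  refine le_trans ?_ hTmem
  by_contra h
  push_neg at h
  have hsp := hk T.card h
  -- build the antichain
  let B : Fin ℓ → Finset ↥T := fun i => Finset.univ.filter (fun C => some i ∈ (C : Finset (Option (Fin ℓ))))
  have hnotsub : ∀ i j : Fin ℓ, i ≠ j → ¬ B j ⊆ B i := by
    intro i j hij hsub
    obtain ⟨C, hCS, hn, hj, hi⟩ := star_key hS hij
    have hCT : C ∈ T := Finset.mem_filter.2 ⟨hCS, hn⟩
    have : (⟨C, hCT⟩ : ↥T) ∈ B j := Finset.mem_filter.2 ⟨Finset.mem_univ _, hj⟩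
    have := hsub this
    exact hi (Finset.mem_filter.1 this).2
  have hBinj : Function.Injective B := by
    intro i j hBij
    by_contra hij
    exact hnotsub i j hij (fun x hx => by rwa [← hBij] at hx)
  have hanti : IsAntichain (· ⊆ ·) (↑(Finset.univ.image B) : Set (Finset ↥T)) := by
    intro a ha b hb hab hsub
    simp only [Finset.coe_image, Set.mem_image] at ha hb
    obtain ⟨i, _, rfl⟩ := ha
    obtain ⟨j, _, rfl⟩ := hb
    exact hnotsub j i (fun h => hab (by rw [h])) hsub
  have hcard : (Finset.univ.image B).card = ℓ := by
    rw [Finset.card_image_of_injective _ hBinj, Finset.card_univ, Fintype.card_fin]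
  have := IsAntichain.sperner hanti
  rw [hcard, Fintype.card_coe] at this
  exact absurd this (not_le.2 hsp)

lemma star_adj {ℓ : ℕ} (i : Fin ℓ) : (_root_.starGraph ℓ).Adj none (some i) := by
  exact fun h => Option.some_ne_none i (cast h rfl)

lemma star_connected {ℓ : ℕ} {C : Finset (Option (Fin ℓ))} (hC : none ∈ C) :
    ((_root_.starGraph ℓ).induce (C : Set (Option (Fin ℓ)))).Connected := by
  rw [SimpleGraph.connected_iff]
  refine ⟨?_, ⟨⟨none, by exact_mod_cast hC⟩⟩⟩
  have key : ∀ a : (C : Set (Option (Fin ℓ))),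
      ((_root_.starGraph ℓ).induce (C : Set (Option (Fin ℓ)))).Reachable a ⟨none, by exact_mod_cast hC⟩ := by
    rintro ⟨a, ha⟩
    match a with
    | none => exact SimpleGraph.Reachable.refl _
    | some i =>
      refine SimpleGraph.Adj.reachable ?_
      exact (star_adj i).symm
  intro a b
  exact (key a).trans (key b).symm

lemma star_singleton_connected {ℓ : ℕ} (x : Option (Fin ℓ)) :
    ((_root_.starGraph ℓ).induce (({x} : Finset (Option (Fin ℓ))) : Set (Option (Fin ℓ)))).Connected := by
  rw [SimpleGraph.connected_iff]
  refine ⟨?_, ⟨⟨x, by simp⟩⟩⟩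
  rintro ⟨a, ha⟩ ⟨b, hb⟩
  simp only [Finset.coe_singleton, Set.mem_singleton_iff] at ha hb
  subst ha; subst hb
  exact SimpleGraph.Reachable.refl _

lemma star_upper {ℓ k : ℕ} (hk2 : 2 ≤ k) (f : Fin ℓ → Finset (Fin k))
    (hfinj : Function.Injective f) (hfcard : ∀ i, (f i).card = k / 2) :
    ∃ S : Finset (Finset (Option (Fin ℓ))), IsGoodSystem (_root_.starGraph ℓ) S ∧ memdim S ≤ k := by
  classical
  set Cat : Fin k → Finset (Option (Fin ℓ)) :=
    fun t => insert none ((Finset.univ.filter (fun i => t ∈ f i)).image some) with hCat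
  have hmemCat : ∀ t i, some i ∈ Cat t ↔ t ∈ f i := by
    intro t i
    simp [hCat]
  have hnoneCat : ∀ t, none ∈ Cat t := fun t => Finset.mem_insert_self _ _
  set S : Finset (Finset (Option (Fin ℓ))) :=
    (Finset.univ.image Cat) ∪ (Finset.univ.image (fun i : Fin ℓ => ({some i} : Finset (Option (Fin ℓ))))) with hSdef
  have hmemS : ∀ C, C ∈ S ↔ (∃ t, C = Cat t) ∨ (∃ i : Fin ℓ, C = {some i}) := by
    intro C
    simp only [hSdef, Finset.mem_union, Finset.mem_image, Finset.mem_univ, true_and]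
    constructor
    · rintro (⟨t, rfl⟩ | ⟨i, rfl⟩)
      exacts [Or.inl ⟨t, rfl⟩, Or.inr ⟨i, rfl⟩]
    · rintro (⟨t, rfl⟩ | ⟨i, rfl⟩)
      exacts [Or.inl ⟨t, rfl⟩, Or.inr ⟨i, rfl⟩]
  have hsingS : ∀ i : Fin ℓ, ({some i} : Finset (Option (Fin ℓ))) ∈ S :=
    fun i => (hmemS _).2 (Or.inr ⟨i, rfl⟩)
  have hCatS : ∀ t, Cat t ∈ S := fun t => (hmemS _).2 (Or.inl ⟨t, rfl⟩)
  -- existence of a coordinate missing from f i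
  have hmissing : ∀ i : Fin ℓ, ∃ t, t ∉ f i := by
    intro i
    by_contra h
    push_neg at h
    have huniv : f i = Finset.univ := Finset.eq_univ_of_forall h
    have hcard := hfcard i
    rw [huniv, Finset.card_univ, Fintype.card_fin] at hcard
    omega
  refine ⟨S, ⟨?_, ?_⟩, ?_⟩
  · -- connectivity
    intro C hC
    rcases (hmemS C).1 hC with ⟨t, rfl⟩ | ⟨i, rfl⟩
    · exact star_connected (hnoneCat t)
    · exact star_singleton_connected _
  · -- distance condition
    rintro s t hst
    match s, t with
    | none, none => exact absurd rfl hst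
    | none, some j =>
      refine ⟨some j, star_adj j, ?_⟩
      have h0 : catDist S (some j) (some j) = 0 := by
        rw [catDist, Finset.card_eq_zero, Finset.filter_eq_empty_iff]
        rintro C -
        tauto
      rw [h0]
      rw [catDist, Finset.card_pos]
      exact ⟨{some j}, Finset.mem_filter.2 ⟨hsingS j, Finset.mem_singleton_self _, by simp⟩⟩
    | some i, none =>
      refine ⟨none, (star_adj i).symm, ?_⟩
      have h0 : catDist S none none = 0 := by
        rw [catDist, Finset.card_eq_zero, Finset.filter_eq_empty_iff]
        rintro C -
        tauto
      rw [h0, catDist, Finset.card_pos]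
      obtain ⟨t0, ht0⟩ := hmissing i
      exact ⟨Cat t0, Finset.mem_filter.2 ⟨hCatS t0, hnoneCat t0,
        fun h => ht0 ((hmemCat t0 i).1 h)⟩⟩
    | some i, some j =>
      have hij : i ≠ j := fun h => hst (by rw [h])
      refine ⟨none, (star_adj i).symm, ?_⟩
      have hle : catDist S none (some j) ≤ 1 := by
        rw [catDist]
        refine le_trans (Finset.card_le_card (s := _) (t := {({some j} : Finset (Option (Fin ℓ)))}) ?_) (by simp)
        intro C hCmem
        rw [Finset.mem_filter] at hCmem
        obtain ⟨hCS, hj, hn⟩ := hCmem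
        rcases (hmemS C).1 hCS with ⟨t, rfl⟩ | ⟨i', rfl⟩
        · exact absurd (hnoneCat t) hn
        · rw [Finset.mem_singleton] at hj
          rw [Finset.mem_singleton, ← hj]
      have hge : 2 ≤ catDist S (some i) (some j) := by
        rw [catDist, show (2:ℕ) = 1 + 1 from rfl, Nat.add_one_le_iff, Finset.one_lt_card]
        obtain ⟨t1, ht1⟩ : (f j \ f i).Nonempty := by
          rw [Finset.sdiff_nonempty]
          intro hsub
          exact hij (hfinj (Finset.eq_of_subset_of_card_le hsub
            (by rw [hfcard, hfcard])).symm)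
        rw [Finset.mem_sdiff] at ht1
        refine ⟨{some j}, Finset.mem_filter.2 ⟨hsingS j, Finset.mem_singleton_self _, by
          simp [hij]⟩, Cat t1, Finset.mem_filter.2 ⟨hCatS t1,
          (hmemCat t1 j).2 ht1.1, fun h => ht1.2 ((hmemCat t1 i).1 h)⟩, ?_⟩
        intro h
        have := hnoneCat t1
        rw [← h, Finset.mem_singleton] at this
        exact (Option.some_ne_none j).symm this
      omega
  · -- memdim ≤ k
    rw [memdim]
    refine Finset.sup_le ?_
    rintro v -
    match v with
    | none =>
      refine le_trans (Finset.card_le_card (t := Finset.univ.image Cat) ?_) ?_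
      · intro C hCmem
        rw [Finset.mem_filter] at hCmem
        obtain ⟨hCS, hn⟩ := hCmem
        rcases (hmemS C).1 hCS with ⟨t, rfl⟩ | ⟨i', rfl⟩
        · exact Finset.mem_image.2 ⟨t, Finset.mem_univ _, rfl⟩
        · simp at hn
      · exact le_trans Finset.card_image_le (by simp)
    | some i =>
      refine le_trans (Finset.card_le_card
        (t := insert ({some i} : Finset (Option (Fin ℓ))) ((f i).image Cat)) ?_) ?_
      · intro C hCmem
        rw [Finset.mem_filter] at hCmem
        obtain ⟨hCS, hi⟩ := hCmem
        rcases (hmemS C).1 hCS with ⟨t, rfl⟩ | ⟨i', rfl⟩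
        · exact Finset.mem_insert.2 (Or.inr (Finset.mem_image.2
            ⟨t, (hmemCat t i).1 hi, rfl⟩))
        · rw [Finset.mem_singleton, Option.some_inj] at hi
          rw [← hi]
          exact Finset.mem_insert_self _ _
      · refine le_trans (Finset.card_insert_le _ _) ?_
        have := Finset.card_image_le (s := f i) (f := Cat)
        rw [hfcard i] at this
        omega

theorem stmt10 (ℓ k : ℕ) (hℓ : 2 ≤ ℓ) (hk : ℓ ≤ k.choose (k / 2))
    (hmin : ∀ k' < k, k'.choose (k' / 2) < ℓ) :
    (∀ S : Finset (Finset (Option (Fin ℓ))), IsGoodSystem (_root_.starGraph ℓ) S →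
        k ≤ memdim S) ∧
    ∃ S : Finset (Finset (Option (Fin ℓ))), IsGoodSystem (_root_.starGraph ℓ) S ∧ memdim S = k := by
  classical
  have hlow := star_lower hmin
  refine ⟨hlow, ?_⟩
  have hk2 : 2 ≤ k := by
    by_contra h
    push_neg at h
    have h1 : k.choose (k / 2) ≤ 1 := by interval_cases k <;> simp
    omega
  -- build an injective family of (k/2)-subsets
  have hcard : ℓ ≤ Fintype.card {s : Finset (Fin k) // s ∈ Finset.powersetCard (k / 2) (Finset.univ : Finset (Fin k))} := by
    rw [Fintype.card_coe, Finset.card_powersetCard, Finset.card_univ, Fintype.card_fin]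
    exact hk
  obtain ⟨e⟩ := Function.Embedding.nonempty_of_card_le (α := Fin ℓ)
    (β := {s : Finset (Fin k) // s ∈ Finset.powersetCard (k / 2) (Finset.univ : Finset (Fin k))})
    (by rwa [Fintype.card_fin])
  set f : Fin ℓ → Finset (Fin k) := fun i => (e i : {s : Finset (Fin k) // s ∈ Finset.powersetCard (k / 2) (Finset.univ : Finset (Fin k))}).1 with hf
  have hfinj : Function.Injective f := fun a b h => e.injective (Subtype.ext h)
  have hfcard : ∀ i, (f i).card = k / 2 := fun i =>
    (Finset.mem_powersetCard.1 (e i).2).2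
  obtain ⟨S, hgood, hle⟩ := star_upper hk2 f hfinj hfcard
  exact ⟨S, hgood, le_antisymm hle (hlow S hgood)⟩
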